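/- Let Y₁,…,Y_n be i.i.d. real random variables, let φ_ε : ℝ → ℂ be continuous and nowhere vanishing, let K : ℝ → ℝ be integrable with Fourier transform φ_K, let h > 0, and assume t ↦ φ_K(th)/φ_ε(t) is integrable. Define f̂(x) = (2π)⁻¹ ∫_ℝ exp(−itx) φ_K(th) φ̂_Y(t)/φ_ε(t) dt. Then E[ sup_{x ∈ ℝ} |f̂(x) − E f̂(x)|² ] ≤ (2π)⁻² n⁻¹ ( ∫_ℝ |φ_K(th)|/|φ_ε(t)| dt )². -/

import Mathlib

open MeasureTheory ProbabilityTheory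
open Complex

lemma aux_indep_integral_mul {Ω : Type*} [MeasureSpace Ω] [IsProbabilityMeasure (ℙ : Measure Ω)]
    {U V : Ω → ℂ} (h : IndepFun U V ℙ)
    (hU : AEStronglyMeasurable U ℙ) (hV : AEStronglyMeasurable V ℙ)
    (hUb : ∀ ω, ‖U ω‖ ≤ 2) (hVb : ∀ ω, ‖V ω‖ ≤ 2) :
    ∫ ω, U ω * V ω ∂ℙ = (∫ ω, U ω ∂ℙ) * ∫ ω, V ω ∂ℙ := by
  have hUi : Integrable U ℙ :=
    Integrable.mono' (integrable_const 2) hU (Filter.Eventually.of_forall hUb)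
  have hVi : Integrable V ℙ :=
    Integrable.mono' (integrable_const 2) hV (Filter.Eventually.of_forall hVb)
  have hUVi : Integrable (fun ω => U ω * V ω) ℙ := by
    refine Integrable.mono' (integrable_const 4) (hU.mul hV)
      (Filter.Eventually.of_forall fun ω => ?_)
    calc ‖U ω * V ω‖ = ‖U ω‖ * ‖V ω‖ := norm_mul _ _
      _ ≤ 2 * 2 := mul_le_mul (hUb ω) (hVb ω) (norm_nonneg _) (by norm_num)
      _ = 4 := by norm_num
  have ha : Integrable (fun ω => (U ω).re) ℙ := hUi.re
  have hb : Integrable (fun ω => (U ω).im) ℙ := hUi.im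
  have hc : Integrable (fun ω => (V ω).re) ℙ := hVi.re
  have hd : Integrable (fun ω => (V ω).im) ℙ := hVi.im
  have iac : ∫ ω, (U ω).re * (V ω).re ∂ℙ = (∫ ω, (U ω).re ∂ℙ) * ∫ ω, (V ω).re ∂ℙ :=
    (h.comp Complex.measurable_re Complex.measurable_re).integral_fun_mul_eq_mul_integral ha.1 hc.1
  have iad : ∫ ω, (U ω).re * (V ω).im ∂ℙ = (∫ ω, (U ω).re ∂ℙ) * ∫ ω, (V ω).im ∂ℙ :=
    (h.comp Complex.measurable_re Complex.measurable_im).integral_fun_mul_eq_mul_integral ha.1 hd.1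
  have ibc : ∫ ω, (U ω).im * (V ω).re ∂ℙ = (∫ ω, (U ω).im ∂ℙ) * ∫ ω, (V ω).re ∂ℙ :=
    (h.comp Complex.measurable_im Complex.measurable_re).integral_fun_mul_eq_mul_integral hb.1 hc.1
  have ibd : ∫ ω, (U ω).im * (V ω).im ∂ℙ = (∫ ω, (U ω).im ∂ℙ) * ∫ ω, (V ω).im ∂ℙ :=
    (h.comp Complex.measurable_im Complex.measurable_im).integral_fun_mul_eq_mul_integral hb.1 hd.1
  have hacI : Integrable (fun ω => (U ω).re * (V ω).re) ℙ :=
    (h.comp Complex.measurable_re Complex.measurable_re).integrable_mul ha hc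
  have hbdI : Integrable (fun ω => (U ω).im * (V ω).im) ℙ :=
    (h.comp Complex.measurable_im Complex.measurable_im).integrable_mul hb hd
  have hadI : Integrable (fun ω => (U ω).re * (V ω).im) ℙ :=
    (h.comp Complex.measurable_re Complex.measurable_im).integrable_mul ha hd
  have hbcI : Integrable (fun ω => (U ω).im * (V ω).re) ℙ :=
    (h.comp Complex.measurable_im Complex.measurable_re).integrable_mul hb hc
  have hre : ∀ {f : Ω → ℂ}, Integrable f ℙ → ∫ ω, (f ω).re ∂ℙ = (∫ ω, f ω ∂ℙ).re := by
    intro f hf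
    rw [← RCLike.re_to_complex, ← integral_re hf]
    simp [RCLike.re_to_complex]
  have him : ∀ {f : Ω → ℂ}, Integrable f ℙ → ∫ ω, (f ω).im ∂ℙ = (∫ ω, f ω ∂ℙ).im := by
    intro f hf
    rw [← RCLike.im_to_complex, ← integral_im hf]
    simp [RCLike.im_to_complex]
  apply Complex.ext
  · rw [← hre hUVi]
    simp only [Complex.mul_re]
    rw [integral_sub hacI hbdI, iac, ibd, hre hUi, hre hVi, him hUi, him hVi]
  · rw [← him hUVi]
    simp only [Complex.mul_im]
    rw [integral_add hadI hbcI, iad, ibc, hre hUi, hre hVi, him hUi, him hVi]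

lemma aux_integral_re {Ω : Type*} [MeasureSpace Ω] {f : Ω → ℂ} (hf : Integrable f ℙ) :
    ∫ ω, (f ω).re ∂ℙ = (∫ ω, f ω ∂ℙ).re := by
  rw [← RCLike.re_to_complex, ← integral_re hf]
  simp [RCLike.re_to_complex]

lemma aux_exp_norm (t y : ℝ) : ‖Complex.exp (Complex.I * t * y)‖ = 1 := by
  rw [Complex.norm_exp]
  simp [Complex.mul_re]

lemma aux_exp_meas (t : ℝ) : Measurable fun y : ℝ => Complex.exp (Complex.I * t * y) :=
  Complex.continuous_exp.measurable.comp ((Complex.measurable_ofReal).const_mul (Complex.I * t))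

lemma aux_var_bound {Ω : Type*} [MeasureSpace Ω] [IsProbabilityMeasure (ℙ : Measure Ω)]
    (n : ℕ) (hn : 1 ≤ n) (Y : Fin n → Ω → ℝ)
    (hmeas : ∀ i, Measurable (Y i))
    (hindep : iIndepFun Y ℙ)
    (hident : ∀ i j, IdentDistrib (Y i) (Y j) ℙ ℙ) (t : ℝ) :
    ∫ ω, ‖((n : ℂ)⁻¹ * ∑ i, Complex.exp (Complex.I * t * Y i ω)) -
        ∫ ω', Complex.exp (Complex.I * t * Y ⟨0, hn⟩ ω') ∂ℙ‖ ^ 2 ∂ℙ ≤ (n : ℝ)⁻¹ := by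
  have hn0 : (n : ℝ) ≠ 0 := by positivity
  have hnC : (n : ℂ) ≠ 0 := Nat.cast_ne_zero.mpr (by omega)
  set e : ℝ → ℂ := fun y => Complex.exp (Complex.I * t * y) with he
  set m0 : ℂ := ∫ ω', e (Y ⟨0, hn⟩ ω') ∂ℙ with hm0
  set Z : Fin n → Ω → ℂ := fun i ω => e (Y i ω) with hZ
  have hZmeas : ∀ i, Measurable (Z i) := fun i => (aux_exp_meas t).comp (hmeas i)
  have hZnorm : ∀ i ω, ‖Z i ω‖ = 1 := fun i ω => aux_exp_norm t _
  have hZint : ∀ i, Integrable (Z i) ℙ := fun i =>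
    Integrable.mono' (integrable_const 1) (hZmeas i).aestronglyMeasurable
      (Filter.Eventually.of_forall fun ω => (hZnorm i ω).le)
  have hZm : ∀ i, ∫ ω, Z i ω ∂ℙ = m0 := fun i =>
    ((hident i ⟨0, hn⟩).comp (aux_exp_meas t)).integral_eq
  have hm0b : ‖m0‖ ≤ 1 := by
    calc ‖m0‖ ≤ ∫ ω', ‖e (Y ⟨0, hn⟩ ω')‖ ∂ℙ := norm_integral_le_integral_norm _
      _ = ∫ _ω' : Ω, (1:ℝ) ∂ℙ := integral_congr_ae (ae_of_all _ fun ω' => aux_exp_norm t _)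
      _ = 1 := by simp
  set V : Fin n → Ω → ℂ := fun i ω => Z i ω - m0 with hV
  have hVmeas : ∀ i, Measurable (V i) := fun i => (hZmeas i).sub measurable_const
  have hVb : ∀ i ω, ‖V i ω‖ ≤ 2 := fun i ω => by
    calc ‖Z i ω - m0‖ ≤ ‖Z i ω‖ + ‖m0‖ := norm_sub_le _ _
      _ ≤ 1 + 1 := by rw [hZnorm i ω]; exact add_le_add le_rfl hm0b
      _ = 2 := by norm_num
  have hVint : ∀ i, Integrable (V i) ℙ := fun i => (hZint i).sub (integrable_const _)
  have hVzero : ∀ i, ∫ ω, V i ω ∂ℙ = 0 := fun i => by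
    rw [hV]
    simp only
    rw [integral_sub (hZint i) (integrable_const _), hZm i, integral_const]
    simp
  have hVVI : ∀ i j, Integrable (fun ω => V i ω * (starRingEnd ℂ) (V j ω)) ℙ := by
    intro i j
    refine Integrable.mono' (integrable_const 4)
      (((hVmeas i).mul ((Complex.continuous_conj.measurable).comp (hVmeas j))).aestronglyMeasurable)
      (Filter.Eventually.of_forall fun ω => ?_)
    rw [norm_mul, RCLike.norm_conj]
    calc ‖V i ω‖ * ‖V j ω‖ ≤ 2 * 2 :=
        mul_le_mul (hVb i ω) (hVb j ω) (norm_nonneg _) (by norm_num)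
      _ = 4 := by norm_num
  -- cross terms vanish
  have hcross : ∀ i j, i ≠ j → ∫ ω, V i ω * (starRingEnd ℂ) (V j ω) ∂ℙ = 0 := by
    intro i j hij
    have hconjm : Measurable fun z : ℂ => (starRingEnd ℂ) z := Complex.continuous_conj.measurable
    have hgm : Measurable fun y : ℝ => (starRingEnd ℂ) (e y - m0) :=
      hconjm.comp ((aux_exp_meas t).sub measurable_const)
    have hind : IndepFun (V i) (fun ω => (starRingEnd ℂ) (V j ω)) ℙ := by
      exact (hindep.indepFun hij).comp (φ := fun y : ℝ => e y - m0)
        (ψ := fun y : ℝ => (starRingEnd ℂ) (e y - m0))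
        ((aux_exp_meas t).sub measurable_const) hgm
    rw [aux_indep_integral_mul hind (hVmeas i).aestronglyMeasurable
      ((Complex.continuous_conj.measurable.comp (hVmeas j)).aestronglyMeasurable)
      (hVb i) (fun ω => by rw [RCLike.norm_conj]; exact hVb j ω), hVzero i, zero_mul]
  -- diagonal terms
  have hdiag : ∀ i, (∫ ω, V i ω * (starRingEnd ℂ) (V i ω) ∂ℙ).re ≤ 1 := by
    intro i
    rw [← aux_integral_re (hVVI i i)]
    have e1 : ∀ ω, (V i ω * (starRingEnd ℂ) (V i ω)).re
        = 1 + Complex.normSq m0 - 2 * (Z i ω * (starRingEnd ℂ) m0).re := by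
      intro ω
      rw [Complex.mul_conj]
      simp only [Complex.ofReal_re]
      rw [Complex.normSq_sub]
      have hz1 : Complex.normSq (Z i ω) = 1 := by
        rw [← Complex.sq_norm, hZnorm i ω]; norm_num
      rw [hz1]
    simp_rw [e1]
    have hI1 : Integrable (fun ω => (Z i ω * (starRingEnd ℂ) m0).re) ℙ :=
      ((hZint i).mul_const _).re
    rw [integral_sub (integrable_const _) (hI1.const_mul 2), integral_const,
      integral_const_mul, aux_integral_re ((hZint i).mul_const _), integral_mul_const, hZm i,
      Complex.mul_conj]
    simp only [probReal_univ, ENNReal.toReal_one, one_smul, Complex.ofReal_re]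
    nlinarith [Complex.normSq_nonneg m0]
  -- main computation
  set W : Ω → ℂ := fun ω => ∑ i, V i ω with hW
  have hWmeas : Measurable W := Finset.measurable_sum _ fun i _ => hVmeas i
  have hWb : ∀ ω, ‖W ω‖ ≤ 2 * (n : ℝ) := fun ω => by
    calc ‖∑ i, V i ω‖ ≤ ∑ i : Fin n, ‖V i ω‖ := norm_sum_le _ _
      _ ≤ ∑ _i : Fin n, (2:ℝ) := Finset.sum_le_sum fun i _ => hVb i ω
      _ = 2 * (n : ℝ) := by simp [mul_comm]
  have hWWI : Integrable (fun ω => W ω * (starRingEnd ℂ) (W ω)) ℙ := by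
    refine Integrable.mono' (integrable_const ((2 * (n:ℝ)) * (2 * (n:ℝ))))
      ((hWmeas.mul (Complex.continuous_conj.measurable.comp hWmeas)).aestronglyMeasurable)
      (Filter.Eventually.of_forall fun ω => ?_)
    rw [norm_mul, RCLike.norm_conj]
    exact mul_le_mul (hWb ω) (hWb ω) (norm_nonneg _) (by positivity)
  have hWsq : ∫ ω, ‖W ω‖ ^ 2 ∂ℙ ≤ (n : ℝ) := by
    have h1 : ∀ ω, ‖W ω‖ ^ 2 = (W ω * (starRingEnd ℂ) (W ω)).re := by
      intro ω
      rw [Complex.mul_conj, Complex.ofReal_re, ← Complex.sq_norm]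
    simp_rw [h1]
    rw [aux_integral_re hWWI]
    have h2 : ∫ ω, W ω * (starRingEnd ℂ) (W ω) ∂ℙ
        = ∑ i, ∑ j, ∫ ω, V i ω * (starRingEnd ℂ) (V j ω) ∂ℙ := by
      have h3 : ∀ ω, W ω * (starRingEnd ℂ) (W ω)
          = ∑ i, ∑ j, V i ω * (starRingEnd ℂ) (V j ω) := by
        intro ω
        rw [hW]
        simp only [map_sum]
        rw [Finset.sum_mul_sum]
      simp_rw [h3]
      rw [integral_finset_sum _ fun i _ => integrable_finset_sum _ fun j _ => hVVI i j]
      exact Finset.sum_congr rfl fun i _ => integral_finset_sum _ fun j _ => hVVI i j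
    rw [h2, Complex.re_sum]
    calc ∑ i, (∑ j, ∫ ω, V i ω * (starRingEnd ℂ) (V j ω) ∂ℙ).re
        ≤ ∑ _i : Fin n, (1 : ℝ) := by
          refine Finset.sum_le_sum fun i _ => ?_
          rw [Complex.re_sum]
          have : ∑ j, (∫ ω, V i ω * (starRingEnd ℂ) (V j ω) ∂ℙ).re
              = (∫ ω, V i ω * (starRingEnd ℂ) (V i ω) ∂ℙ).re := by
            refine Finset.sum_eq_single i (fun j _ hji => ?_) (fun hni => absurd (Finset.mem_univ i) hni)
            rw [hcross i j (Ne.symm hji)]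
            simp
          rw [this]
          exact hdiag i
      _ = (n : ℝ) := by simp
  -- put together
  have hΔ : ∀ ω, ((n : ℂ)⁻¹ * ∑ i, Complex.exp (Complex.I * t * Y i ω)) -
      (∫ ω', Complex.exp (Complex.I * t * Y ⟨0, hn⟩ ω') ∂ℙ) = (n : ℂ)⁻¹ * W ω := by
    intro ω
    rw [hW]
    simp only [hV, hZ]
    rw [Finset.sum_sub_distrib, Finset.sum_const, Finset.card_univ, Fintype.card_fin,
      nsmul_eq_mul, mul_sub, ← mul_assoc, inv_mul_cancel₀ hnC, one_mul]
  simp_rw [hm0, he, hΔ]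
  have hnn : ∀ ω, ‖(n : ℂ)⁻¹ * W ω‖ ^ 2 = ((n : ℝ)⁻¹) ^ 2 * ‖W ω‖ ^ 2 := by
    intro ω
    rw [norm_mul, mul_pow, norm_inv, Complex.norm_natCast]
  simp_rw [hnn]
  rw [integral_const_mul]
  calc ((n : ℝ)⁻¹) ^ 2 * ∫ ω, ‖W ω‖ ^ 2 ∂ℙ ≤ ((n : ℝ)⁻¹) ^ 2 * n :=
      mul_le_mul_of_nonneg_left hWsq (by positivity)
    _ = (n : ℝ)⁻¹ := by field_simp

lemma aux_exp_norm' (t x : ℝ) : ‖Complex.exp (-(Complex.I * t * x))‖ = 1 := by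
  rw [Complex.norm_exp]
  simp [Complex.mul_re]

lemma aux_exp_cont (x : ℝ) : Continuous fun t : ℝ => Complex.exp (Complex.I * t * x) :=
  Complex.continuous_exp.comp
    ((continuous_const.mul Complex.continuous_ofReal).mul continuous_const)

lemma aux_phiK_cont (K : ℝ → ℝ) (hK : Integrable K) :
    Continuous fun t : ℝ => ∫ x : ℝ, Complex.exp (Complex.I * t * x) * K x := by
  apply continuous_of_dominated (bound := fun x => ‖K x‖)
  · intro t
    exact ((aux_exp_meas t).aestronglyMeasurable).mul
      (Complex.continuous_ofReal.comp_aestronglyMeasurable hK.1)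
  · intro t
    filter_upwards with x
    rw [norm_mul, aux_exp_norm, one_mul, Complex.norm_real]
  · exact hK.norm
  · filter_upwards with x
    exact (aux_exp_cont x).mul continuous_const

lemma aux_m_cont {Ω : Type*} [MeasureSpace Ω] [IsProbabilityMeasure (ℙ : Measure Ω)]
    (X : Ω → ℝ) (hX : Measurable X) :
    Continuous fun t : ℝ => ∫ ω, Complex.exp (Complex.I * t * X ω) ∂ℙ := by
  apply continuous_of_dominated (bound := fun _ => (1 : ℝ))
  · intro t
    exact ((aux_exp_meas t).comp hX).aestronglyMeasurable
  · intro t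
    filter_upwards with ω
    rw [aux_exp_norm]
  · exact integrable_const 1
  · filter_upwards with ω
    exact aux_exp_cont (X ω)

/-- For i.i.d. `Y₁, …, Y_n`, continuous nowhere-vanishing `φ_ε`,
integrable `K` with Fourier transform `φ_K`, `h > 0`, and `t ↦ φ_K(th)/φ_ε(t)` integrable,
the deconvolution density estimator
`f̂(x) = (2π)⁻¹ ∫ exp(−itx) φ_K(th) φ̂_Y(t)/φ_ε(t) dt` satisfies
`E[sup_x |f̂(x) − E f̂(x)|²] ≤ (2π)⁻² n⁻¹ (∫ |φ_K(th)|/|φ_ε(t)| dt)²`. -/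
theorem stmt_8 {Ω : Type*} [MeasureSpace Ω] [IsProbabilityMeasure (ℙ : Measure Ω)]
    (n : ℕ) (hn : 1 ≤ n) (Y : Fin n → Ω → ℝ)
    (hmeas : ∀ i, Measurable (Y i))
    (hindep : iIndepFun Y ℙ)
    (hident : ∀ i j, IdentDistrib (Y i) (Y j) ℙ ℙ)
    (K : ℝ → ℝ) (hK : Integrable K)
    (φK : ℝ → ℂ) (hφK : ∀ t : ℝ, φK t = ∫ x : ℝ, Complex.exp (Complex.I * t * x) * K x)
    (φε : ℝ → ℂ) (hφεc : Continuous φε) (hφε0 : ∀ t, φε t ≠ 0)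
    (h : ℝ) (hh : 0 < h)
    (hint : Integrable (fun t : ℝ => φK (t * h) / φε t))
    (fhat : Ω → ℝ → ℂ)
    (hfhat : ∀ ω x, fhat ω x =
      ((2 * Real.pi : ℝ) : ℂ)⁻¹ *
        ∫ t : ℝ, Complex.exp (-(Complex.I * t * x)) * φK (t * h) *
          ((n : ℂ)⁻¹ * ∑ i, Complex.exp (Complex.I * t * Y i ω)) / φε t)
    (Ef : ℝ → ℂ)
    (hEf : ∀ x, Ef x =
      ((2 * Real.pi : ℝ) : ℂ)⁻¹ *
        ∫ t : ℝ, Complex.exp (-(Complex.I * t * x)) * φK (t * h) *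
          (∫ ω, Complex.exp (Complex.I * t * Y ⟨0, hn⟩ ω) ∂ℙ) / φε t) :
    (∫ ω, (⨆ x : ℝ, ‖fhat ω x - Ef x‖ ^ 2) ∂ℙ)
      ≤ ((2 * Real.pi) ^ 2)⁻¹ * (n : ℝ)⁻¹ * (∫ t : ℝ, ‖φK (t * h)‖ / ‖φε t‖) ^ 2 := by
  have hn0 : ((n : ℝ)) ≠ 0 := by positivity
  set w : ℝ → ℂ := fun t => φK (t * h) / φε t with hw
  have hφKc : Continuous φK := by
    have h1 : φK = fun t : ℝ => ∫ x : ℝ, Complex.exp (Complex.I * t * x) * K x := funext hφK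
    rw [h1]; exact aux_phiK_cont K hK
  have hwc : Continuous w :=
    (hφKc.comp (continuous_id.mul continuous_const)).div hφεc hφε0
  set m : ℝ → ℂ := fun t => ∫ ω, Complex.exp (Complex.I * t * Y ⟨0, hn⟩ ω) ∂ℙ with hm
  have hmc : Continuous m := aux_m_cont _ (hmeas _)
  have hmb : ∀ t, ‖m t‖ ≤ 1 := by
    intro t
    calc ‖m t‖ ≤ ∫ ω, ‖Complex.exp (Complex.I * t * Y ⟨0, hn⟩ ω)‖ ∂ℙ :=
        norm_integral_le_integral_norm _
      _ = ∫ _ω : Ω, (1 : ℝ) ∂ℙ := integral_congr_ae (ae_of_all _ fun ω => aux_exp_norm t _)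
      _ = 1 := by simp
  set S : Ω → ℝ → ℂ := fun ω t => (n : ℂ)⁻¹ * ∑ i, Complex.exp (Complex.I * t * Y i ω) with hS
  have hSc : ∀ ω, Continuous (S ω) := fun ω =>
    continuous_const.mul (continuous_finset_sum _ fun i _ => aux_exp_cont (Y i ω))
  have hSb : ∀ ω t, ‖S ω t‖ ≤ 1 := by
    intro ω t
    rw [norm_mul, norm_inv, Complex.norm_natCast]
    calc (n : ℝ)⁻¹ * ‖∑ i, Complex.exp (Complex.I * t * Y i ω)‖
        ≤ (n : ℝ)⁻¹ * ∑ _i : Fin n, (1 : ℝ) := by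
          refine mul_le_mul_of_nonneg_left ?_ (by positivity)
          refine le_trans (norm_sum_le _ _) (Finset.sum_le_sum fun i _ => (aux_exp_norm t _).le)
      _ = 1 := by simp [Finset.sum_const]; field_simp
  set Δ : Ω → ℝ → ℂ := fun ω t => S ω t - m t with hΔ
  have hΔc : ∀ ω, Continuous (Δ ω) := fun ω => (hSc ω).sub hmc
  have hΔb : ∀ ω t, ‖Δ ω t‖ ≤ 2 := fun ω t => by
    calc ‖S ω t - m t‖ ≤ ‖S ω t‖ + ‖m t‖ := norm_sub_le _ _
      _ ≤ 1 + 1 := add_le_add (hSb ω t) (hmb t)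
      _ = 2 := by norm_num
  -- integrability of the two integrands
  have hI1 : ∀ ω (x : ℝ), Integrable (fun t : ℝ =>
      Complex.exp (-(Complex.I * t * x)) * φK (t * h) * S ω t / φε t) := by
    intro ω x
    have heq : (fun t : ℝ => Complex.exp (-(Complex.I * t * x)) * φK (t * h) * S ω t / φε t)
        = fun t : ℝ => (Complex.exp (-(Complex.I * t * x)) * S ω t) * w t := by
      funext t; rw [hw]; ring
    rw [heq]
    refine Integrable.mono' hint.norm
      (((Complex.continuous_exp.comp (((continuous_const.mul Complex.continuous_ofReal).mul
        continuous_const).neg)).mul (hSc ω)).aestronglyMeasurable.mul hint.1)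
      (Filter.Eventually.of_forall fun t => ?_)
    rw [norm_mul, norm_mul, aux_exp_norm', one_mul]
    calc ‖S ω t‖ * ‖w t‖ ≤ 1 * ‖w t‖ :=
        mul_le_mul_of_nonneg_right (hSb ω t) (norm_nonneg _)
      _ = ‖w t‖ := one_mul _
  have hI2 : ∀ (x : ℝ), Integrable (fun t : ℝ =>
      Complex.exp (-(Complex.I * t * x)) * φK (t * h) * m t / φε t) := by
    intro x
    have heq : (fun t : ℝ => Complex.exp (-(Complex.I * t * x)) * φK (t * h) * m t / φε t)
        = fun t : ℝ => (Complex.exp (-(Complex.I * t * x)) * m t) * w t := by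
      funext t; rw [hw]; ring
    rw [heq]
    refine Integrable.mono' hint.norm
      (((Complex.continuous_exp.comp (((continuous_const.mul Complex.continuous_ofReal).mul
        continuous_const).neg)).mul hmc).aestronglyMeasurable.mul hint.1)
      (Filter.Eventually.of_forall fun t => ?_)
    rw [norm_mul, norm_mul, aux_exp_norm', one_mul]
    calc ‖m t‖ * ‖w t‖ ≤ 1 * ‖w t‖ :=
        mul_le_mul_of_nonneg_right (hmb t) (norm_nonneg _)
      _ = ‖w t‖ := one_mul _
  -- the difference formula
  have hdiff : ∀ ω x, fhat ω x - Ef x = ((2 * Real.pi : ℝ) : ℂ)⁻¹ *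
      ∫ t : ℝ, (Complex.exp (-(Complex.I * t * x)) * Δ ω t) * w t := by
    intro ω x
    rw [hfhat, hEf, ← mul_sub, ← integral_sub (hI1 ω x) (hI2 x)]
    congr 1
    refine integral_congr_ae (ae_of_all _ fun t => ?_)
    rw [hΔ, hw]
    simp only
    ring
  set B : Ω → ℝ := fun ω => ∫ t : ℝ, ‖w t‖ * ‖Δ ω t‖ with hB
  have hBnonneg : ∀ ω, 0 ≤ B ω := fun ω =>
    integral_nonneg fun t => mul_nonneg (norm_nonneg _) (norm_nonneg _)
  have hnormdiff : ∀ ω x, ‖fhat ω x - Ef x‖ ≤ (2 * Real.pi)⁻¹ * B ω := by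
    intro ω x
    rw [hdiff, norm_mul, norm_inv, Complex.norm_real, Real.norm_eq_abs,
      abs_of_pos Real.two_pi_pos]
    refine mul_le_mul_of_nonneg_left ?_ (by positivity)
    refine le_trans (norm_integral_le_integral_norm _) (le_of_eq ?_)
    refine integral_congr_ae (ae_of_all _ fun t => ?_)
    show ‖Complex.exp (-(Complex.I * t * x)) * Δ ω t * w t‖ = ‖w t‖ * ‖Δ ω t‖
    rw [norm_mul, norm_mul, aux_exp_norm', one_mul, mul_comm]
  set C : ℝ := ∫ t : ℝ, ‖w t‖ with hC
  have hCnonneg : 0 ≤ C := integral_nonneg fun t => norm_nonneg _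
  set G : Ω → ℝ := fun ω => ∫ t : ℝ, ‖w t‖ * ‖Δ ω t‖ ^ 2 with hG
  have hGnonneg : ∀ ω, 0 ≤ G ω := fun ω =>
    integral_nonneg fun t => mul_nonneg (norm_nonneg _) (by positivity)
  -- Cauchy-Schwarz
  have hrpow2 : ∀ x : ℝ, x ^ (2 : ℝ) = x ^ 2 := fun x => by
    rw [show (2 : ℝ) = ((2 : ℕ) : ℝ) by norm_num, Real.rpow_natCast]
  have hCS : ∀ ω, B ω ^ 2 ≤ C * G ω := by
    intro ω
    set f : ℝ → ℝ := fun t => Real.sqrt ‖w t‖ with hf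
    set g : ℝ → ℝ := fun t => Real.sqrt ‖w t‖ * ‖Δ ω t‖ with hg
    have hfm : AEStronglyMeasurable f volume :=
      Real.continuous_sqrt.comp_aestronglyMeasurable hint.norm.1
    have hgm : AEStronglyMeasurable g volume :=
      hfm.mul ((hΔc ω).norm.aestronglyMeasurable)
    have hf2 : Integrable (fun t => f t ^ 2) volume := by
      have heq2 : (fun t => f t ^ 2) = fun t => ‖w t‖ :=
        funext fun t => Real.sq_sqrt (norm_nonneg _)
      rw [heq2]; exact hint.norm
    have hg2 : Integrable (fun t => g t ^ 2) volume := by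
      have he : (fun t => g t ^ 2) = fun t => ‖w t‖ * ‖Δ ω t‖ ^ 2 := by
        funext t
        show (Real.sqrt ‖w t‖ * ‖Δ ω t‖) ^ 2 = ‖w t‖ * ‖Δ ω t‖ ^ 2
        rw [mul_pow, Real.sq_sqrt (norm_nonneg _)]
      rw [he]
      refine Integrable.mono' (hint.norm.mul_const 4)
        (hint.norm.1.mul ((hΔc ω).norm.pow 2).aestronglyMeasurable)
        (Filter.Eventually.of_forall fun t => ?_)
      rw [Real.norm_eq_abs, _root_.abs_of_nonneg (mul_nonneg (norm_nonneg _) (by positivity))]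
      refine mul_le_mul_of_nonneg_left ?_ (norm_nonneg _)
      calc ‖Δ ω t‖ ^ 2 ≤ 2 ^ 2 := by
            exact pow_le_pow_left₀ (norm_nonneg _) (hΔb ω t) 2
        _ = 4 := by norm_num
    have hpq : Real.HolderConjugate 2 2 := Real.HolderConjugate.two_two
    have hMf : MemLp f (ENNReal.ofReal 2) volume := by
      rw [show ENNReal.ofReal 2 = 2 by simp]
      exact (memLp_two_iff_integrable_sq hfm).2 hf2
    have hMg : MemLp g (ENNReal.ofReal 2) volume := by
      rw [show ENNReal.ofReal 2 = 2 by simp]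
      exact (memLp_two_iff_integrable_sq hgm).2 hg2
    have key := integral_mul_le_Lp_mul_Lq_of_nonneg hpq
      (ae_of_all _ fun t => Real.sqrt_nonneg _)
      (ae_of_all _ fun t => mul_nonneg (Real.sqrt_nonneg _) (norm_nonneg _)) hMf hMg
    have e1 : ∫ t, f t * g t = B ω := by
      refine integral_congr_ae (ae_of_all _ fun t => ?_)
      show Real.sqrt ‖w t‖ * (Real.sqrt ‖w t‖ * ‖Δ ω t‖) = ‖w t‖ * ‖Δ ω t‖
      rw [← mul_assoc, Real.mul_self_sqrt (norm_nonneg _)]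
    have e2 : ∫ t, f t ^ (2 : ℝ) = C := by
      refine integral_congr_ae (ae_of_all _ fun t => ?_)
      show Real.sqrt ‖w t‖ ^ (2 : ℝ) = ‖w t‖
      rw [hrpow2, Real.sq_sqrt (norm_nonneg _)]
    have e3 : ∫ t, g t ^ (2 : ℝ) = G ω := by
      refine integral_congr_ae (ae_of_all _ fun t => ?_)
      show (Real.sqrt ‖w t‖ * ‖Δ ω t‖) ^ (2 : ℝ) = ‖w t‖ * ‖Δ ω t‖ ^ 2
      rw [hrpow2, mul_pow, Real.sq_sqrt (norm_nonneg _)]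
    rw [e1, e2, e3] at key
    have hsq : ∀ a : ℝ, 0 ≤ a → (a ^ ((1:ℝ)/2)) ^ 2 = a := by
      intro a ha
      rw [← Real.rpow_natCast (a ^ ((1:ℝ)/2)) 2, ← Real.rpow_mul ha]
      norm_num
    calc B ω ^ 2 ≤ (C ^ ((1:ℝ)/2) * G ω ^ ((1:ℝ)/2)) ^ 2 :=
        pow_le_pow_left₀ (hBnonneg ω) key 2
      _ = C * G ω := by
        rw [mul_pow, hsq C hCnonneg, hsq (G ω) (hGnonneg ω)]
  -- sup bound
  have hsup : ∀ ω, (⨆ x : ℝ, ‖fhat ω x - Ef x‖ ^ 2)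
      ≤ ((2 * Real.pi) ^ 2)⁻¹ * (C * G ω) := by
    intro ω
    refine ciSup_le fun x => ?_
    calc ‖fhat ω x - Ef x‖ ^ 2 ≤ ((2 * Real.pi)⁻¹ * B ω) ^ 2 :=
        pow_le_pow_left₀ (norm_nonneg _) (hnormdiff ω x) 2
      _ = ((2 * Real.pi) ^ 2)⁻¹ * B ω ^ 2 := by rw [mul_pow, inv_pow]
      _ ≤ ((2 * Real.pi) ^ 2)⁻¹ * (C * G ω) :=
        mul_le_mul_of_nonneg_left (hCS ω) (by positivity)
  -- Fubini and the variance bound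
  have hΔjm : Measurable fun p : Ω × ℝ => Δ p.1 p.2 := by
    refine Measurable.sub ?_ (hmc.measurable.comp measurable_snd)
    exact measurable_const.mul (Finset.measurable_sum _ fun i _ =>
      Complex.continuous_exp.measurable.comp
        ((measurable_const.mul (Complex.measurable_ofReal.comp measurable_snd)).mul
          (Complex.measurable_ofReal.comp ((hmeas i).comp measurable_fst))))
  have hFmeas : Measurable fun p : Ω × ℝ => ‖w p.2‖ * ‖Δ p.1 p.2‖ ^ 2 :=
    (hwc.norm.measurable.comp measurable_snd).mul (hΔjm.norm.pow_const 2)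
  have hmap : Measure.map Prod.snd ((ℙ : Measure Ω).prod (volume : Measure ℝ)) = (volume : Measure ℝ) := by
    rw [Measure.map_snd_prod]; simp
  have hbound_int : Integrable (fun p : Ω × ℝ => ‖w p.2‖ * 4) ((ℙ : Measure Ω).prod volume) := by
    have h1 : Integrable (fun t : ℝ => ‖w t‖ * 4) volume := hint.norm.mul_const 4
    have h2 : Integrable ((fun t : ℝ => ‖w t‖ * 4) ∘ Prod.snd)
        ((ℙ : Measure Ω).prod (volume : Measure ℝ)) := by
      refine (integrable_map_measure (μ := (ℙ : Measure Ω).prod (volume : Measure ℝ))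
        (f := Prod.snd) (g := fun t : ℝ => ‖w t‖ * 4) ?_ measurable_snd.aemeasurable).mp ?_
      · rw [hmap]; exact h1.1
      · rw [hmap]; exact h1
    exact h2
  have hFint : Integrable (fun p : Ω × ℝ => ‖w p.2‖ * ‖Δ p.1 p.2‖ ^ 2)
      ((ℙ : Measure Ω).prod volume) := by
    refine Integrable.mono' hbound_int hFmeas.aestronglyMeasurable
      (Filter.Eventually.of_forall fun p => ?_)
    rw [Real.norm_eq_abs, _root_.abs_of_nonneg (mul_nonneg (norm_nonneg _) (by positivity))]
    refine mul_le_mul_of_nonneg_left ?_ (norm_nonneg _)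
    calc ‖Δ p.1 p.2‖ ^ 2 ≤ 2 ^ 2 := pow_le_pow_left₀ (norm_nonneg _) (hΔb p.1 p.2) 2
      _ = 4 := by norm_num
  have hGint : Integrable G ℙ := by
    have := hFint.integral_prod_left (f := fun p : Ω × ℝ => ‖w p.2‖ * ‖Δ p.1 p.2‖ ^ 2)
    exact this
  have hswap : ∫ ω, G ω ∂ℙ = ∫ t : ℝ, ∫ ω, ‖w t‖ * ‖Δ ω t‖ ^ 2 ∂ℙ := by
    exact integral_integral_swap (f := fun ω t => ‖w t‖ * ‖Δ ω t‖ ^ 2) hFint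
  have hinner : ∀ t : ℝ, ∫ ω, ‖w t‖ * ‖Δ ω t‖ ^ 2 ∂ℙ ≤ ‖w t‖ * (n : ℝ)⁻¹ := by
    intro t
    rw [integral_const_mul]
    exact mul_le_mul_of_nonneg_left
      (aux_var_bound n hn Y hmeas hindep hident t) (norm_nonneg _)
  have hGtotal : ∫ ω, G ω ∂ℙ ≤ C * (n : ℝ)⁻¹ := by
    rw [hswap]
    calc (∫ t : ℝ, ∫ ω, ‖w t‖ * ‖Δ ω t‖ ^ 2 ∂ℙ) ≤ ∫ t : ℝ, ‖w t‖ * (n : ℝ)⁻¹ := by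
          refine integral_mono ?_ (hint.norm.mul_const _) hinner
          exact hFint.integral_prod_right (f := fun p : Ω × ℝ => ‖w p.2‖ * ‖Δ p.1 p.2‖ ^ 2)
      _ = C * (n : ℝ)⁻¹ := by rw [integral_mul_const]
  -- conclusion
  have hRHS : (∫ t : ℝ, ‖φK (t * h)‖ / ‖φε t‖) = C := by
    refine integral_congr_ae (ae_of_all _ fun t => ?_)
    rw [hw]
    simp only
    rw [norm_div]
  rw [hRHS]
  calc (∫ ω, (⨆ x : ℝ, ‖fhat ω x - Ef x‖ ^ 2) ∂ℙ)
      ≤ ∫ ω, ((2 * Real.pi) ^ 2)⁻¹ * (C * G ω) ∂ℙ := by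
        refine integral_mono_of_nonneg (ae_of_all _ fun ω => ?_)
          (((hGint.const_mul C).const_mul _)) (ae_of_all _ fun ω => hsup ω)
        exact Real.iSup_nonneg fun x => by positivity
    _ = ((2 * Real.pi) ^ 2)⁻¹ * (C * ∫ ω, G ω ∂ℙ) := by
        rw [integral_const_mul, integral_const_mul]
    _ ≤ ((2 * Real.pi) ^ 2)⁻¹ * (C * (C * (n : ℝ)⁻¹)) := by
        refine mul_le_mul_of_nonneg_left
          (mul_le_mul_of_nonneg_left hGtotal hCnonneg) (by positivity)
    _ = ((2 * Real.pi) ^ 2)⁻¹ * (n : ℝ)⁻¹ * C ^ 2 := by ring
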